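/- There exists a bijection B from the positive integers onto the set of all even binary partitions such that B_1 is the empty partition, the sums |B_k| are nondecreasing, each B_{k+1} is obtained from B_k either by an elementary move or by adding a single new part equal to 2, and moreover every elementary-move transition involves one of the two largest part sizes: if B_{k+1} is obtained from B_k by merging two copies of 2^j into 2^{j+1}, then 2^j is the largest or second-largest distinct part size occurring in B_k, and if B_{k+1} is obtained from B_k by splitting a part 2^{j+1} into two copies of 2^j, then 2^{j+1} is the largest or second-largest distinct part size occurring in B_k. -/

import Mathlib

/-- An even binary partition: a multiset of parts, each a power of two that is at least 2. -/
def IsEvenBinaryPartition (P : Multiset ℕ) : Prop := ∀ p ∈ P, ∃ k : ℕ, 1 ≤ k ∧ p = 2 ^ k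

/-- `P` and `Q` differ by an elementary move with `k ≥ 1`: `Q` is obtained from `P`
by removing two copies of `2^k` and adding one copy of `2^(k+1)`, or vice versa. -/
def EvenElementaryMove (P Q : Multiset ℕ) : Prop :=
  ∃ k : ℕ, 1 ≤ k ∧
    (Q + {2 ^ k, 2 ^ k} = P + {2 ^ (k + 1)} ∨ P + {2 ^ k, 2 ^ k} = Q + {2 ^ (k + 1)})

/-- `v` is the largest or second-largest distinct part size occurring in `P`:
`v` occurs in `P` and at most one distinct size larger than `v` occurs in `P`. -/
def InTopTwoSizes (P : Multiset ℕ) (v : ℕ) : Prop :=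
  v ∈ P ∧ ∀ p ∈ P, ∀ q ∈ P, v < p → v < q → p = q


def Uni (P : Multiset ℕ) : Prop := ∀ a ∈ P, ∀ b ∈ P, a = b

def TopMove (P Q : Multiset ℕ) : Prop :=
  ∃ j : ℕ, 1 ≤ j ∧
    ((Q + {2 ^ j, 2 ^ j} = P + {2 ^ (j + 1)} ∧ InTopTwoSizes P (2 ^ j) ∧ InTopTwoSizes Q (2 ^ (j + 1))) ∨
     (Q + {2 ^ (j + 1)} = P + {2 ^ j, 2 ^ j} ∧ InTopTwoSizes P (2 ^ (j + 1)) ∧ InTopTwoSizes Q (2 ^ j)))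

def GStep (P Q : Multiset ℕ) : Prop := (Q = P + {2} ∧ Uni P) ∨ TopMove P Q

def dbl (n : ℕ) (Q : Multiset ℕ) : Multiset ℕ :=
  Q.map (fun x => 2 * x) + Multiset.replicate (n - Q.sum) 2

def L : ℕ → List (Multiset ℕ)
  | 0 => [0]
  | n + 1 =>
      L n ++ (if (n + 1) % 2 = 1 then (L ((n+1)/2)).reverse else L ((n+1)/2)).map (dbl (n+1))
  termination_by n => n
  decreasing_by all_goals omega

lemma L_ne_nil (n : ℕ) : L n ≠ [] := by
  cases n with
  | zero => simp [L]
  | succ n => simp only [L]; intro h; rcases List.append_eq_nil_iff.mp h with ⟨h1, _⟩; exact L_ne_nil n h1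

lemma L_succ (n : ℕ) : L (n + 1) =
    L n ++ (if (n + 1) % 2 = 1 then (L ((n+1)/2)).reverse else L ((n+1)/2)).map (dbl (n+1)) := by
  simp only [L]

lemma length_L_lt (n : ℕ) : n < (L n).length := by
  induction n using Nat.strong_induction_on with
  | _ n ih =>
    cases n with
    | zero => show 0 < (L 0).length; rw [show L 0 = [0] by simp only [L]]; simp
    | succ n =>
      have h1 := ih n (by omega)
      have h2 : (L ((n+1)/2)).length ≥ 1 :=
        List.length_pos_iff.mpr (L_ne_nil _)
      rw [L_succ, List.length_append, List.length_map]
      split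
      · rw [List.length_reverse]; omega
      · omega

lemma L_prefix_succ (n : ℕ) : L n <+: L (n + 1) := by
  rw [L_succ]; exact List.prefix_append _ _

lemma L_prefix {m n : ℕ} (h : m ≤ n) : L m <+: L n := by
  induction n with
  | zero => simp_all
  | succ n ih =>
    rcases Nat.lt_or_ge m (n+1) with h' | h'
    · exact (ih (by omega)).trans (L_prefix_succ n)
    · have : m = n + 1 := by omega
      subst this; exact List.prefix_rfl

lemma L_zero : L 0 = [0] := by simp only [L]

def M (k : ℕ) : Multiset ℕ := (L k).getD k 0

lemma getD_prefix {l₁ l₂ : List (Multiset ℕ)} (h : l₁ <+: l₂) {k : ℕ} (hk : k < l₁.length) :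
    l₂.getD k 0 = l₁.getD k 0 := by
  rw [List.getD_eq_getElem _ _ hk, List.getD_eq_getElem _ _ (hk.trans_le h.length_le)]
  exact (h.getElem hk).symm

lemma M_eq {n k : ℕ} (h : k < (L n).length) : (L n).getD k 0 = M k := by
  rcases le_total k n with h' | h'
  · exact getD_prefix (L_prefix h') (length_L_lt k)
  · exact (getD_prefix (L_prefix h') h).symm

lemma sum_map_two (Q : Multiset ℕ) : (Q.map (fun x => 2 * x)).sum = 2 * Q.sum := by
  induction Q using Multiset.induction with
  | empty => simp
  | cons a s ih => simp [ih]; ring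

lemma dbl_sum {n : ℕ} {Q : Multiset ℕ} (h : Q.sum ≤ n) : (dbl n Q).sum = 2 * n := by
  rw [dbl, Multiset.sum_add, Multiset.sum_replicate, sum_map_two, smul_eq_mul]
  omega

lemma dbl_EBP {n : ℕ} {Q : Multiset ℕ} (h : IsEvenBinaryPartition Q) :
    IsEvenBinaryPartition (dbl n Q) := by
  intro p hp
  rw [dbl, Multiset.mem_add] at hp
  rcases hp with hp | hp
  · rcases Multiset.mem_map.mp hp with ⟨x, hx, rfl⟩
    rcases h x hx with ⟨k, hk, rfl⟩
    exact ⟨k + 1, by omega, by rw [pow_succ]; ring⟩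
  · rw [Multiset.mem_replicate] at hp
    exact ⟨1, le_refl _, by rw [hp.2]; norm_num⟩

lemma mem_block {n : ℕ} {P : Multiset ℕ}
    (h : P ∈ (if (n + 1) % 2 = 1 then (L ((n+1)/2)).reverse else L ((n+1)/2)).map (dbl (n+1))) :
    ∃ Q ∈ L ((n+1)/2), P = dbl (n+1) Q := by
  rcases List.mem_map.mp h with ⟨Q, hQ, rfl⟩
  refine ⟨Q, ?_, rfl⟩
  split at hQ
  · exact List.mem_reverse.mp hQ
  · exact hQ

lemma L_mem (n : ℕ) : ∀ P ∈ L n, IsEvenBinaryPartition P ∧ P.sum ≤ 2 * n := by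
  induction n using Nat.strong_induction_on with
  | _ n ih =>
    cases n with
    | zero =>
      intro P hP
      rw [L_zero] at hP
      simp at hP
      subst hP
      exact ⟨fun p hp => by simp at hp, by simp⟩
    | succ n =>
      intro P hP
      rw [L_succ] at hP
      rcases List.mem_append.mp hP with h | h
      · obtain ⟨h1, h2⟩ := ih n (by omega) P h
        exact ⟨h1, by omega⟩
      · obtain ⟨Q, hQ, rfl⟩ := mem_block h
        obtain ⟨hE, hs⟩ := ih ((n+1)/2) (by omega) Q hQ
        have hsn : Q.sum ≤ n + 1 := by omega
        exact ⟨dbl_EBP hE, by rw [dbl_sum hsn]⟩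

lemma mem_block_sum {n : ℕ} {P : Multiset ℕ}
    (h : P ∈ (if (n + 1) % 2 = 1 then (L ((n+1)/2)).reverse else L ((n+1)/2)).map (dbl (n+1))) :
    P.sum = 2 * (n + 1) := by
  obtain ⟨Q, hQ, rfl⟩ := mem_block h
  have hs := (L_mem _ Q hQ).2
  exact dbl_sum (by omega)

lemma two_mul_inj : Function.Injective (fun x : ℕ => 2 * x) := fun a b hab => by
  simp only at hab; omega

lemma dbl_filter {n : ℕ} {Q : Multiset ℕ} (h : IsEvenBinaryPartition Q) :
    (dbl n Q).filter (fun x => ¬ x = 2) = Q.map (fun x => 2 * x) := by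
  rw [dbl, Multiset.filter_add]
  have h1 : (Q.map (fun x => 2 * x)).filter (fun x => ¬ x = 2) = Q.map (fun x => 2 * x) := by
    rw [Multiset.filter_eq_self]
    intro a ha
    rcases Multiset.mem_map.mp ha with ⟨x, hx, rfl⟩
    rcases h x hx with ⟨k, hk, rfl⟩
    have : 2 ≤ 2 ^ k := Nat.one_lt_two_pow (by omega)
    omega
  have h2 : (Multiset.replicate (n - Q.sum) 2).filter (fun x => ¬ x = 2) = 0 := by
    rw [Multiset.filter_eq_nil]
    intro a ha
    rw [Multiset.eq_of_mem_replicate ha]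
    simp
  rw [h1, h2, add_zero]

lemma dbl_inj {n : ℕ} {Q Q' : Multiset ℕ} (hQ : IsEvenBinaryPartition Q)
    (hQ' : IsEvenBinaryPartition Q') (h : dbl n Q = dbl n Q') : Q = Q' := by
  have := congrArg (Multiset.filter (fun x => ¬ x = 2)) h
  rw [dbl_filter hQ, dbl_filter hQ'] at this
  exact Multiset.map_injective two_mul_inj this

lemma L_nodup (n : ℕ) : (L n).Nodup := by
  induction n using Nat.strong_induction_on with
  | _ n ih =>
    cases n with
    | zero => rw [L_zero]; simp
    | succ n =>
      rw [L_succ]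
      refine List.Nodup.append (ih n (by omega)) ?_ ?_
      · refine List.Nodup.map_on ?_ ?_
        · intro x hx y hy hxy
          have hx' : x ∈ L ((n+1)/2) := by
            split at hx
            · exact List.mem_reverse.mp hx
            · exact hx
          have hy' : y ∈ L ((n+1)/2) := by
            split at hy
            · exact List.mem_reverse.mp hy
            · exact hy
          exact dbl_inj (L_mem _ x hx').1 (L_mem _ y hy').1 hxy
        · split
          · exact (List.nodup_reverse).mpr (ih ((n+1)/2) (by omega))
          · exact ih ((n+1)/2) (by omega)
      · intro P hP hP'
        have h1 : P.sum ≤ 2 * n := (L_mem n P hP).2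
        have h2 : P.sum = 2 * (n + 1) := mem_block_sum hP'
        omega

lemma L_surj (n : ℕ) : ∀ P : Multiset ℕ, IsEvenBinaryPartition P → P.sum ≤ 2 * n → P ∈ L n := by
  induction n using Nat.strong_induction_on with
  | _ n ih =>
    cases n with
    | zero =>
      intro P hE hs
      have : P = 0 := by
        by_contra h
        rcases Multiset.exists_mem_of_ne_zero h with ⟨x, hx⟩
        rcases hE x hx with ⟨k, hk, rfl⟩
        have h1 : 2 ≤ 2 ^ k := Nat.one_lt_two_pow (by omega)
        have h2 : 2 ^ k ≤ P.sum := Multiset.single_le_sum (fun _ _ => Nat.zero_le _) _ hx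
        omega
      rw [this, L_zero]; simp
    | succ n =>
      intro P hE hs
      by_cases hle : P.sum ≤ 2 * n
      · exact (L_prefix_succ n).subset (ih n (by omega) P hE hle)
      · have hd : 2 ∣ P.sum := Multiset.dvd_sum (fun x hx => by
          rcases hE x hx with ⟨k, hk, rfl⟩
          exact dvd_pow_self 2 (by omega))
        have hsum : P.sum = 2 * (n + 1) := by omega
        set c := P.count 2 with hc
        set Q0 := P.filter (fun x => ¬ x = 2) with hQ0
        have hP : Multiset.replicate c 2 + Q0 = P := by
          rw [hc, hQ0, ← Multiset.filter_eq']
          exact Multiset.filter_add_not _ P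
        have hQ02 : ∀ x ∈ Q0, ∃ k, 2 ≤ k ∧ x = 2 ^ k := by
          intro x hx
          have hxP := Multiset.mem_of_mem_filter hx
          have hx2 : ¬ x = 2 := (Multiset.mem_filter.mp hx).2
          rcases hE x hxP with ⟨k, hk, rfl⟩
          refine ⟨k, ?_, rfl⟩
          rcases Nat.lt_or_ge k 2 with h | h
          · interval_cases k
            simp at hx2
          · exact h
        set Q := Q0.map (fun x => x / 2) with hQdef
        have hQ0map : Q.map (fun x => 2 * x) = Q0 := by
          rw [hQdef, Multiset.map_map]
          have : ∀ x ∈ Q0, 2 * (x / 2) = x := by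
            intro x hx
            rcases hQ02 x hx with ⟨k, hk, rfl⟩
            exact Nat.mul_div_cancel' (dvd_pow_self 2 (by omega)) 
          calc Q0.map ((fun x => 2 * x) ∘ (fun x => x / 2)) = Q0.map id := 
                Multiset.map_congr rfl (fun x hx => this x hx)
            _ = Q0 := Multiset.map_id Q0
        have hQE : IsEvenBinaryPartition Q := by
          intro p hp
          rcases Multiset.mem_map.mp hp with ⟨x, hx, rfl⟩
          rcases hQ02 x hx with ⟨k, hk, rfl⟩
          refine ⟨k - 1, by omega, ?_⟩
          obtain ⟨m, rfl⟩ : ∃ m, k = m + 1 := ⟨k - 1, by omega⟩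
          rw [pow_succ, Nat.mul_div_cancel _ (by norm_num : (0:ℕ) < 2)]
          simp
        have hsums : 2 * c + Q0.sum = 2 * (n + 1) := by
          have := congrArg Multiset.sum hP
          rw [Multiset.sum_add, Multiset.sum_replicate, smul_eq_mul, hsum] at this
          omega
        have hQsum : 2 * Q.sum = Q0.sum := by
          rw [← hQ0map, sum_map_two]
        have hcodd : (n + 1) % 2 = 1 → 1 ≤ c := by
          intro hodd
          by_contra h
          have hc0 : c = 0 := by omega
          have : (4 : ℕ) ∣ Q0.sum := Multiset.dvd_sum (fun x hx => by
            rcases hQ02 x hx with ⟨k, hk, rfl⟩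
            have : (4 : ℕ) = 2 ^ 2 := by norm_num
            rw [this]
            exact pow_dvd_pow 2 hk)
          omega
        have hQle : Q.sum ≤ 2 * ((n + 1) / 2) := by
          rcases Nat.mod_two_eq_zero_or_one (n + 1) with h | h
          · omega
          · have := hcodd h
            omega
        have hQL : Q ∈ L ((n+1)/2) := ih ((n+1)/2) (by omega) Q hQE hQle
        have hPd : P = dbl (n+1) Q := by
          rw [dbl, hQ0map]
          have h1 : n + 1 - Q.sum = c := by omega
          rw [h1, ← hP, add_comm]
        rw [L_succ, hPd]
        refine List.mem_append_right _ (List.mem_map.mpr ⟨Q, ?_, rfl⟩)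
        split
        · exact List.mem_reverse.mpr hQL
        · exact hQL

lemma two_mul_pow (j : ℕ) : 2 * 2 ^ j = 2 ^ (j + 1) := by rw [pow_succ]; ring

lemma topMove_symm {P Q : Multiset ℕ} (h : TopMove P Q) : TopMove Q P := by
  rcases h with ⟨j, hj, ⟨he, h1, h2⟩ | ⟨he, h1, h2⟩⟩
  · exact ⟨j, hj, Or.inr ⟨he.symm, h2, h1⟩⟩
  · exact ⟨j, hj, Or.inl ⟨he.symm, h2, h1⟩⟩

lemma pair_sum (a b : ℕ) : ({a, b} : Multiset ℕ).sum = a + b := by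
  simp

lemma topMove_sum {P Q : Multiset ℕ} (h : TopMove P Q) : Q.sum = P.sum := by
  have hp : ∀ j : ℕ, 2 ^ (j + 1) = 2 ^ j + 2 ^ j := by
    intro j; rw [pow_succ]; ring
  rcases h with ⟨j, hj, ⟨he, -, -⟩ | ⟨he, -, -⟩⟩ <;>
  · have := congrArg Multiset.sum he
    simp only [Multiset.sum_add, pair_sum, Multiset.sum_singleton] at this
    have h2 := hp j
    omega

lemma intop_dbl {n : ℕ} {Q : Multiset ℕ} {v : ℕ} (hv : 2 ≤ v) (h : InTopTwoSizes Q v) :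
    InTopTwoSizes (dbl n Q) (2 * v) := by
  constructor
  · rw [dbl, Multiset.mem_add]
    exact Or.inl (Multiset.mem_map.mpr ⟨v, h.1, rfl⟩)
  · intro p hp q hq hpv hqv
    rw [dbl, Multiset.mem_add] at hp hq
    rcases hp with hp | hp
    · rcases hq with hq | hq
      · rcases Multiset.mem_map.mp hp with ⟨a, ha, rfl⟩
        rcases Multiset.mem_map.mp hq with ⟨b, hb, rfl⟩
        have := h.2 a ha b hb (by omega) (by omega)
        omega
      · have := Multiset.eq_of_mem_replicate hq; omega
    · have := Multiset.eq_of_mem_replicate hp; omega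

lemma rep_two_add (k : ℕ) : Multiset.replicate k 2 + {2, 2} = Multiset.replicate (k + 2) 2 := by
  have : ({2, 2} : Multiset ℕ) = Multiset.replicate 2 2 := rfl
  rw [this, ← Multiset.replicate_add]

lemma lift_merge {n j : ℕ} {P Q : Multiset ℕ}
    (hsP : P.sum ≤ n) (hj : 1 ≤ j)
    (he : Q + {2 ^ j, 2 ^ j} = P + {2 ^ (j + 1)})
    (h1 : InTopTwoSizes P (2 ^ j)) (h2 : InTopTwoSizes Q (2 ^ (j + 1))) :
    TopMove (dbl n P) (dbl n Q) := by
  have hsum : Q.sum = P.sum := by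
    have := congrArg Multiset.sum he
    simp only [Multiset.sum_add, pair_sum, Multiset.sum_singleton] at this
    have h2 := two_mul_pow j
    omega
  have hmap : Q.map (fun x => 2 * x) + {2 ^ (j + 1), 2 ^ (j + 1)} =
      P.map (fun x => 2 * x) + {2 ^ (j + 2)} := by
    have := congrArg (Multiset.map (fun x => 2 * x)) he
    simp only [Multiset.map_add] at this
    have e1 : ({2 ^ j, 2 ^ j} : Multiset ℕ).map (fun x => 2 * x) = {2 ^ (j+1), 2 ^ (j+1)} := by
      simp [two_mul_pow]
    have e2 : ({2 ^ (j+1)} : Multiset ℕ).map (fun x => 2 * x) = {2 ^ (j+2)} := by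
      simp [two_mul_pow]
    rw [e1, e2] at this
    exact this
  refine ⟨j + 1, by omega, Or.inl ⟨?_, ?_, ?_⟩⟩
  · show dbl n Q + {2 ^ (j+1), 2 ^ (j+1)} = dbl n P + {2 ^ (j + 2)}
    rw [dbl, dbl, hsum]
    calc Q.map (fun x => 2*x) + Multiset.replicate (n - P.sum) 2 + {2^(j+1), 2^(j+1)}
        = (Q.map (fun x => 2*x) + {2^(j+1), 2^(j+1)}) + Multiset.replicate (n - P.sum) 2 := by
          simp [add_comm, add_assoc, add_left_comm]
      _ = (P.map (fun x => 2*x) + {2^(j+2)}) + Multiset.replicate (n - P.sum) 2 := by rw [hmap]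
      _ = P.map (fun x => 2*x) + Multiset.replicate (n - P.sum) 2 + {2^(j+2)} := by
          simp [add_comm, add_assoc, add_left_comm]
  · have := intop_dbl (n := n) (Nat.one_lt_two_pow (by omega : j ≠ 0)) h1
    rwa [two_mul_pow] at this
  · have := intop_dbl (n := n) (Nat.one_lt_two_pow (by omega : j + 1 ≠ 0)) h2
    rwa [two_mul_pow] at this

lemma lift_add2 {n : ℕ} {Q : Multiset ℕ} (hu : Uni Q) (hs : Q.sum + 2 ≤ n) :
    TopMove (dbl n Q) (dbl n (Q + {2})) := by
  have h1 : (Q + {2}).sum = Q.sum + 2 := by simp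
  have h2 : ({2} : Multiset ℕ).map (fun x => 2 * x) = {4} := by simp
  have e : dbl n (Q + {2}) =
      Q.map (fun x => 2 * x) + {4} + Multiset.replicate (n - Q.sum - 2) 2 := by
    rw [dbl, h1, Multiset.map_add, h2]
    have h3 : n - (Q.sum + 2) = n - Q.sum - 2 := by omega
    rw [h3]
  have E : dbl n (Q + {2}) + {2, 2} = dbl n Q + {4} := by
    rw [e, dbl]
    calc Q.map (fun x => 2*x) + {4} + Multiset.replicate (n - Q.sum - 2) 2 + {2, 2}
        = Q.map (fun x => 2*x) + {4} +
            (Multiset.replicate (n - Q.sum - 2) 2 + {2, 2}) := by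
          simp [add_assoc]
      _ = Q.map (fun x => 2*x) + {4} + Multiset.replicate (n - Q.sum) 2 := by
          have h4 : n - Q.sum - 2 + 2 = n - Q.sum := by omega
          rw [rep_two_add, h4]
      _ = Q.map (fun x => 2*x) + Multiset.replicate (n - Q.sum) 2 + {4} := by
          simp [add_comm, add_assoc, add_left_comm]
  have itt1 : InTopTwoSizes (dbl n Q) 2 := by
    constructor
    · rw [dbl, Multiset.mem_add]
      exact Or.inr (Multiset.mem_replicate.mpr ⟨by omega, rfl⟩)
    · intro p hp q hq hp2 hq2
      rw [dbl, Multiset.mem_add] at hp hq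
      rcases hp with hp | hp
      · rcases hq with hq | hq
        · rcases Multiset.mem_map.mp hp with ⟨a, ha, rfl⟩
          rcases Multiset.mem_map.mp hq with ⟨b, hb, rfl⟩
          rw [hu a ha b hb]
        · have := Multiset.eq_of_mem_replicate hq; omega
      · have := Multiset.eq_of_mem_replicate hp; omega
  have itt2 : InTopTwoSizes (dbl n (Q + {2})) 4 := by
    rw [e]
    constructor
    · rw [Multiset.mem_add, Multiset.mem_add]
      exact Or.inl (Or.inr (by simp))
    · intro p hp q hq hp4 hq4
      rw [Multiset.mem_add, Multiset.mem_add] at hp hq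
      have hcase : ∀ r, (r ∈ Q.map (fun x => 2*x) ∨ r ∈ ({4} : Multiset ℕ)) ∨
          r ∈ Multiset.replicate (n - Q.sum - 2) 2 → 4 < r → ∃ a ∈ Q, r = 2 * a := by
        intro r hr hr4
        rcases hr with hr | hr
        · rcases hr with hr | hr
          · exact Multiset.mem_map.mp hr |>.imp fun a ⟨ha, hra⟩ => ⟨ha, hra.symm⟩
          · simp at hr; omega
        · have := Multiset.eq_of_mem_replicate hr; omega
      obtain ⟨a, ha, rfl⟩ := hcase p hp hp4
      obtain ⟨b, hb, rfl⟩ := hcase q hq hq4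
      rw [hu a ha b hb]
  refine ⟨1, le_refl 1, Or.inl ⟨?_, ?_, ?_⟩⟩
  · rw [show (2:ℕ)^1 = 2 by norm_num, show (2:ℕ)^(1+1) = 4 by norm_num]
    exact E
  · rw [show (2:ℕ)^1 = 2 by norm_num]
    exact itt1
  · rw [show (2:ℕ)^(1+1) = 4 by norm_num]
    exact itt2

lemma lift_gstep {n : ℕ} {Q Q' : Multiset ℕ} (hsQ : Q.sum ≤ n) (hsQ' : Q'.sum ≤ n)
    (h : GStep Q Q') : GStep (dbl n Q) (dbl n Q') ∧ GStep (dbl n Q') (dbl n Q) := by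
  rcases h with ⟨rfl, hu⟩ | htm
  · have hs2 : Q.sum + 2 ≤ n := by
      have h0 : (Q + {2}).sum = Q.sum + 2 := by
        rw [Multiset.sum_add, Multiset.sum_singleton]
      omega
    have tm := lift_add2 hu hs2
    exact ⟨Or.inr tm, Or.inr (topMove_symm tm)⟩
  · rcases htm with ⟨j, hj, ⟨he, h1, h2⟩ | ⟨he, h1, h2⟩⟩
    · have tm := lift_merge (n := n) hsQ hj he h1 h2
      exact ⟨Or.inr tm, Or.inr (topMove_symm tm)⟩
    · have tm := lift_merge (n := n) hsQ' hj he.symm h2 h1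
      exact ⟨Or.inr (topMove_symm tm), Or.inr tm⟩

lemma L_head (n : ℕ) : (L n).head? = some 0 := by
  induction n with
  | zero => rw [L_zero]; rfl
  | succ n ih => rw [L_succ, List.head?_append, ih]; rfl

lemma dbl_zero (n : ℕ) : dbl n 0 = Multiset.replicate n 2 := by
  simp [dbl]

lemma uni_replicate (n a : ℕ) : Uni (Multiset.replicate n a) := by
  intro x hx y hy
  rw [Multiset.eq_of_mem_replicate hx, Multiset.eq_of_mem_replicate hy]

lemma uni_map2 {Q : Multiset ℕ} (h : Uni Q) : Uni (Q.map (fun x => 2 * x)) := by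
  intro x hx y hy
  rcases Multiset.mem_map.mp hx with ⟨a, ha, rfl⟩
  rcases Multiset.mem_map.mp hy with ⟨b, hb, rfl⟩
  rw [h a ha b hb]

lemma L_last (n : ℕ) : ∃ x, (L n).getLast? = some x ∧ Uni x ∧ x.sum = 2 * n ∧
    (n % 2 = 1 → x = Multiset.replicate n 2) ∧
    (n % 2 = 0 → ∀ y, (L (n / 2)).getLast? = some y → x = y.map (fun t => 2 * t)) := by
  induction n using Nat.strong_induction_on with
  | _ n ih =>
    cases n with
    | zero =>
      refine ⟨0, by rw [L_zero]; rfl, fun a ha => by simp at ha, by simp, by omega, ?_⟩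
      intro _ y hy
      rw [show (0:ℕ)/2 = 0 by omega, L_zero] at hy
      simp at hy
      rw [← hy]
      simp
    | succ n =>
      rcases Nat.mod_two_eq_zero_or_one (n + 1) with hpar | hpar
      · -- n+1 even
        obtain ⟨y, hy, hyU, hysum, -, -⟩ := ih ((n+1)/2) (by omega)
        have hys : y.sum = n + 1 := by omega
        have hd : dbl (n+1) y = y.map (fun x => 2 * x) := by
          rw [dbl, hys]
          simp
        refine ⟨dbl (n+1) y, ?_, by rw [hd]; exact uni_map2 hyU,
          by rw [dbl_sum (by omega)], by omega, ?_⟩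
        · rw [L_succ, List.getLast?_append, if_neg (by omega), List.getLast?_map, hy]
          rfl
        · intro _ z hz
          rw [hy] at hz
          obtain rfl : y = z := Option.some.inj hz
          exact hd
      · -- n+1 odd
        refine ⟨Multiset.replicate (n+1) 2, ?_, uni_replicate _ _, ?_, fun _ => rfl, by omega⟩
        · rw [L_succ, List.getLast?_append, if_pos hpar, List.getLast?_map,
            List.getLast?_reverse, L_head]
          simp [dbl_zero]
        · rw [Multiset.sum_replicate, smul_eq_mul]
          omega

lemma chain'_mono_mem {α : Type*} {R S : α → α → Prop} {l : List α}
    (h : List.IsChain R l) (hf : ∀ a ∈ l, ∀ b ∈ l, R a b → S a b) : List.IsChain S l := by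
  rw [List.isChain_iff_getElem] at h ⊢
  intro i hi
  exact hf _ (List.getElem_mem _) _ (List.getElem_mem _) (h i hi)

lemma L_chain (n : ℕ) : List.IsChain GStep (L n) := by
  induction n using Nat.strong_induction_on with
  | _ n ih =>
    cases n with
    | zero => rw [L_zero]; exact List.isChain_singleton 0
    | succ n =>
      have hm : (n+1)/2 < n + 1 := by omega
      have hsum_le : ∀ a ∈ L ((n+1)/2), a.sum ≤ n + 1 := by
        intro a ha
        have := (L_mem _ a ha).2
        omega
      have hlift : ∀ a ∈ L ((n+1)/2), ∀ b ∈ L ((n+1)/2), GStep a b →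
          GStep (dbl (n+1) a) (dbl (n+1) b) ∧ GStep (dbl (n+1) b) (dbl (n+1) a) :=
        fun a ha b hb hab => lift_gstep (hsum_le a ha) (hsum_le b hb) hab
      rw [L_succ]
      refine List.IsChain.append (ih n (by omega)) ?_ ?_
      · split
        · rw [List.isChain_map, List.isChain_reverse]
          refine chain'_mono_mem (ih _ hm) ?_
          intro a ha b hb hab
          exact (hlift a ha b hb hab).2
        · rw [List.isChain_map]
          refine chain'_mono_mem (ih _ hm) ?_
          intro a ha b hb hab
          exact (hlift a ha b hb hab).1
      · -- junction
        intro x hx y hy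
        obtain ⟨x', hx', hxU, hxsum, hodd, heven⟩ := L_last n
        rw [hx'] at hx
        obtain rfl : x' = x := Option.mem_some_iff.mp hx
        rcases Nat.mod_two_eq_zero_or_one (n + 1) with hpar | hpar
        · -- n+1 even, n odd : x = replicate n 2, y = dbl (n+1) 0 = replicate (n+1) 2
          rw [if_neg (by omega), List.head?_map, L_head] at hy
          obtain rfl : dbl (n+1) 0 = y := Option.mem_some_iff.mp (by simpa using hy)
          have hxr := hodd (by omega)
          left
          constructor
          · rw [dbl_zero, hxr, show n + 1 = n + 1 from rfl]
            rw [show Multiset.replicate (n+1) 2 = 2 ::ₘ Multiset.replicate n 2 from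
              Multiset.replicate_succ 2 n]
            rw [add_comm, Multiset.singleton_add]
          · rw [hxr]; exact uni_replicate _ _
        · -- n+1 odd, n even : x = (last L(n/2)).map2, y = dbl (n+1) (last L(n/2))
          rw [if_pos hpar, List.head?_map, List.head?_reverse] at hy
          obtain ⟨z, hz, hzU, hzsum, -, -⟩ := L_last ((n+1)/2)
          rw [hz] at hy
          obtain rfl : dbl (n+1) z = y := Option.mem_some_iff.mp (by simpa using hy)
          have hmm : (n+1)/2 = n/2 := by omega
          have hxz := heven (by omega) z (by rw [← hmm]; exact hz)
          have hzs : z.sum = n := by omega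
          left
          constructor
          · rw [dbl, hzs, hxz, show n + 1 - n = 1 by omega, Multiset.replicate_one]
          · rw [hxz]; exact uni_map2 hzU

lemma pair_combine {P Q X1 Y1 X2 Y2 : Multiset ℕ} (e1 : Q + X1 = P + Y1)
    (e2 : Q + X2 = P + Y2) : X1 + Y2 = X2 + Y1 := by
  have h : Q + (X1 + Y2) = Q + (X2 + Y1) := by
    rw [← add_assoc, e1, ← add_assoc, e2, add_right_comm]
  exact add_left_cancel h

lemma pow_eq_pow_nat {a b : ℕ} (h : (2:ℕ) ^ a = 2 ^ b) : a = b :=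
  Nat.pow_right_injective (by norm_num) h

lemma gstep_final {P Q : Multiset ℕ} (h : GStep P Q) :
    (EvenElementaryMove P Q ∨ Q = P + {2}) ∧ P.sum ≤ Q.sum ∧
    ∀ j : ℕ, 1 ≤ j →
      (Q + {2 ^ j, 2 ^ j} = P + {2 ^ (j + 1)} → InTopTwoSizes P (2 ^ j)) ∧
      (Q + {2 ^ (j + 1)} = P + {2 ^ j, 2 ^ j} → InTopTwoSizes P (2 ^ (j + 1))) := by
  rcases h with ⟨rfl, hu⟩ | ⟨j₀, hj₀, ⟨he, h1, h2⟩ | ⟨he, h1, h2⟩⟩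
  · refine ⟨Or.inr rfl, by simp, ?_⟩
    intro j hj
    constructor
    · intro hyp
      exfalso
      rw [add_assoc] at hyp
      have := add_left_cancel hyp
      have hcard := congrArg Multiset.card this
      simp at hcard
    · intro hyp
      exfalso
      rw [add_assoc] at hyp
      have := add_left_cancel hyp
      have hsum := congrArg Multiset.sum this
      rw [Multiset.sum_add, Multiset.sum_singleton, Multiset.sum_singleton, pair_sum] at hsum
      have h2 := two_mul_pow j
      omega
  · -- merge at j₀
    refine ⟨Or.inl ⟨j₀, hj₀, Or.inl he⟩, by rw [topMove_sum ⟨j₀, hj₀, Or.inl ⟨he, h1, h2⟩⟩], ?_⟩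
    intro j hj
    constructor
    · intro hyp
      have key := pair_combine hyp he
      have hmem : (2:ℕ) ^ j ∈ ({2 ^ j₀, 2 ^ j₀} : Multiset ℕ) + {2 ^ (j + 1)} := by
        rw [← key, Multiset.mem_add]
        left
        simp
      rw [Multiset.mem_add] at hmem
      have hjj : j = j₀ := by
        rcases hmem with hm | hm <;> simp at hm <;> omega
      rw [hjj]
      exact h1
    · intro hyp
      exfalso
      have key := pair_combine he hyp
      have hcard := congrArg Multiset.card key
      simp at hcard
  · -- split at j₀
    refine ⟨Or.inl ⟨j₀, hj₀, Or.inr he.symm⟩,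
      by rw [topMove_sum ⟨j₀, hj₀, Or.inr ⟨he, h1, h2⟩⟩], ?_⟩
    intro j hj
    constructor
    · intro hyp
      exfalso
      have key := pair_combine hyp he
      have hcard := congrArg Multiset.card key
      simp at hcard
    · intro hyp
      have key := pair_combine hyp he
      have hmem : (2:ℕ) ^ j₀ ∈ ({2 ^ (j+1)} : Multiset ℕ) + {2 ^ j₀, 2 ^ j₀} := by
        rw [Multiset.mem_add]
        right
        simp
      rw [key, Multiset.mem_add] at hmem
      have hjj : j₀ = j := by
        rcases hmem with hm | hm <;> simp at hm <;> omega
      rw [← hjj]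
      exact h1

lemma M_mem_L {n k : ℕ} (h : k ≤ n) : M k ∈ L n := by
  have hk : k < (L n).length := lt_of_lt_of_le (length_L_lt k) (L_prefix h).length_le
  rw [← M_eq hk, List.getD_eq_getElem _ _ hk]
  exact List.getElem_mem _

lemma M_zero : M 0 = 0 := by
  unfold M
  rw [L_zero]
  rfl

lemma M_EBP (k : ℕ) : IsEvenBinaryPartition (M k) :=
  (L_mem k (M k) (M_mem_L (le_refl k))).1

lemma M_gstep (k : ℕ) : GStep (M k) (M (k + 1)) := by
  have hc := L_chain (k + 1)
  rw [List.isChain_iff_getElem] at hc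
  have hlen := length_L_lt (k + 1)
  have hk : k + 1 < (L (k+1)).length := by omega
  have h := hc k hk
  have e1 : (L (k+1))[k] = M k := by
    rw [← List.getD_eq_getElem (L (k+1)) 0 (by omega)]
    exact M_eq (by omega)
  have e2 : (L (k+1))[k + 1] = M (k + 1) := by
    rw [← List.getD_eq_getElem (L (k+1)) 0 (by omega)]
    exact M_eq (by omega)
  rwa [e1, e2] at h

lemma M_inj : Function.Injective M := by
  have key : ∀ a b : ℕ, a < b → M a ≠ M b := by
    intro a b hab
    have hb : b < (L b).length := length_L_lt b
    have ha : a < (L b).length := by omega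
    have e1 : M a = (L b)[a] := by
      rw [← List.getD_eq_getElem (L b) 0 ha]
      exact (M_eq ha).symm
    have e2 : M b = (L b)[b] := by
      rw [← List.getD_eq_getElem (L b) 0 hb]
      exact (M_eq hb).symm
    rw [e1, e2]
    intro hcon
    have := (List.Nodup.getElem_inj_iff (L_nodup b)).mp hcon
    omega
  intro a b hab
  rcases lt_trichotomy a b with h | h | h
  · exact absurd hab (key a b h)
  · exact h
  · exact absurd hab.symm (key b a h)

lemma M_surj (P : Multiset ℕ) (hE : IsEvenBinaryPartition P) : ∃ k, M k = P := by
  have hmem : P ∈ L P.sum := L_surj P.sum P hE (by omega)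
  rw [List.mem_iff_getElem] at hmem
  obtain ⟨i, hi, hP⟩ := hmem
  refine ⟨i, ?_⟩
  rw [← hP, ← List.getD_eq_getElem (L P.sum) 0 hi]
  exact (M_eq hi).symm

lemma pnat_natPred_succ (k : ℕ+) : (k + 1 : ℕ+).natPred = k.natPred + 1 := by
  have h1 := PNat.natPred_add_one (k + 1)
  have h2 := PNat.natPred_add_one k
  have h3 : ((k + 1 : ℕ+) : ℕ) = (k : ℕ) + 1 := by push_cast; ring
  omega


theorem gray_sequence_top_two_sizes :
    ∃ B : ℕ+ → Multiset ℕ,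
      (∀ k, IsEvenBinaryPartition (B k)) ∧
      Function.Injective B ∧
      (∀ P : Multiset ℕ, IsEvenBinaryPartition P → ∃ k, B k = P) ∧
      B 1 = 0 ∧
      Monotone (fun k => (B k).sum) ∧
      (∀ k, EvenElementaryMove (B k) (B (k + 1)) ∨ B (k + 1) = B k + {2}) ∧
      (∀ k, ∀ j : ℕ, 1 ≤ j →
        -- merging two copies of 2^j of B k into one 2^(j+1)
        (B (k + 1) + {2 ^ j, 2 ^ j} = B k + {2 ^ (j + 1)} → InTopTwoSizes (B k) (2 ^ j)) ∧
        -- splitting one 2^(j+1) of B k into two copies of 2^j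
        (B (k + 1) + {2 ^ (j + 1)} = B k + {2 ^ j, 2 ^ j} → InTopTwoSizes (B k) (2 ^ (j + 1)))) := by
  refine ⟨fun k => M k.natPred, fun k => M_EBP _, ?_, ?_, ?_, ?_, ?_, ?_⟩
  · intro a b hab
    exact PNat.natPred_inj.mp (M_inj hab)
  · intro P hP
    obtain ⟨i, hi⟩ := M_surj P hP
    refine ⟨⟨i + 1, i.succ_pos⟩, ?_⟩
    have h0 : PNat.natPred ⟨i + 1, i.succ_pos⟩ = i := rfl
    simpa [h0] using hi
  · have : (1 : ℕ+).natPred = 0 := rfl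
    simpa [this] using M_zero
  · have hmono : Monotone (fun i : ℕ => (M i).sum) :=
      monotone_nat_of_le_succ (fun i => (gstep_final (M_gstep i)).2.1)
    intro a b hab
    apply hmono
    have h1 := PNat.natPred_add_one a
    have h2 := PNat.natPred_add_one b
    have h3 : (a : ℕ) ≤ b := hab
    omega
  · intro k
    have h := (gstep_final (M_gstep k.natPred)).1
    simpa [pnat_natPred_succ k] using h
  · intro k j hj
    have h := (gstep_final (M_gstep k.natPred)).2.2 j hj
    simpa [pnat_natPred_succ k] using h
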